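/- A simplicial set X is isomorphic to the nerve of a small category if and only if for every k ≥ 1 the canonical map X_k → X_1 ×_{X_0} ⋯ ×_{X_0} X_1 (induced by the k inclusions [1] → [k] of consecutive edges, with fibre products over source/target maps to X_0) is a bijection. -/

import Mathlib

open CategoryTheory Simplicial SSet SimplexCategory SimplicialObject Opposite

universe u

set_option linter.unusedSectionVars false

namespace SegalNerveAux

/-- extensionality for maps out of `[1]` -/
lemma hom1_ext {n : SimplexCategory} (f g : (⦋1⦌ : SimplexCategory) ⟶ n)
    (h0 : f.toOrderHom 0 = g.toOrderHom 0) (h1 : f.toOrderHom 1 = g.toOrderHom 1) : f = g := by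
  ext i
  fin_cases i
  · exact congrArg Fin.val h0
  · exact congrArg Fin.val h1

lemma δ1_comp_mkOfLe {n : ℕ} (i j : Fin (n + 1)) (h : i ≤ j) :
    (SimplexCategory.δ 1 : (⦋0⦌ : SimplexCategory) ⟶ ⦋1⦌) ≫ mkOfLe i j h = SimplexCategory.const ⦋0⦌ ⦋n⦌ i := by
  apply Hom.ext_zero_left
  rfl

lemma δ0_comp_mkOfLe {n : ℕ} (i j : Fin (n + 1)) (h : i ≤ j) :
    (SimplexCategory.δ 0 : (⦋0⦌ : SimplexCategory) ⟶ ⦋1⦌) ≫ mkOfLe i j h = SimplexCategory.const ⦋0⦌ ⦋n⦌ j := by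
  apply Hom.ext_zero_left
  rfl

lemma mkOfLe_self {n : ℕ} (i : Fin (n + 1)) :
    mkOfLe i i le_rfl = SimplexCategory.const ⦋1⦌ ⦋n⦌ i := by
  apply hom1_ext <;> rfl

lemma mkOfSucc_eq_mkOfLe {n : ℕ} (i : Fin n) :
    mkOfSucc i = mkOfLe i.castSucc i.succ (Fin.castSucc_le_succ i) := by
  apply hom1_ext <;> rfl

lemma const_one_fac {n : ℕ} (i : Fin (n + 1)) :
    SimplexCategory.const ⦋1⦌ ⦋n⦌ i =
      (SimplexCategory.σ 0 : (⦋1⦌ : SimplexCategory) ⟶ ⦋0⦌) ≫ SimplexCategory.const ⦋0⦌ ⦋n⦌ i := by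
  apply hom1_ext <;> rfl

lemma diag_eq {n : ℕ} : SimplexCategory.diag n = mkOfLe 0 (Fin.last n) (Fin.zero_le _) := by
  apply hom1_ext
  · rfl
  · rfl

variable {X : SSet.{u}}

lemma map_map {k m n : SimplexCategory} (f : m ⟶ n) (g : k ⟶ m) (Δ : X.obj (op n)) :
    X.map g.op (X.map f.op Δ) = X.map (g ≫ f).op Δ := by
  rw [op_comp, FunctorToTypes.map_comp_apply]


/-- the `i`-th vertex of a simplex -/
def V {n : ℕ} (Δ : X _⦋n⦌) (i : Fin (n + 1)) : X _⦋0⦌ :=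
  X.map (SimplexCategory.const ⦋0⦌ ⦋n⦌ i).op Δ

/-- the edge of a simplex from vertex `i` to vertex `j` -/
def E {n : ℕ} (Δ : X _⦋n⦌) {i j : Fin (n + 1)} (h : i ≤ j) : X _⦋1⦌ :=
  X.map (mkOfLe i j h).op Δ

lemma δ1_E {n : ℕ} (Δ : X _⦋n⦌) {i j : Fin (n + 1)} (h : i ≤ j) :
    X.δ 1 (E Δ h) = V Δ i := by
  show X.map _ (X.map _ _) = _
  rw [map_map, δ1_comp_mkOfLe]
  rfl

lemma δ0_E {n : ℕ} (Δ : X _⦋n⦌) {i j : Fin (n + 1)} (h : i ≤ j) :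
    X.δ 0 (E Δ h) = V Δ j := by
  show X.map _ (X.map _ _) = _
  rw [map_map, δ0_comp_mkOfLe]
  rfl

lemma E_self {n : ℕ} (Δ : X _⦋n⦌) (i : Fin (n + 1)) :
    E Δ (le_refl i) = X.σ 0 (V Δ i) := by
  show X.map _ _ = X.map _ (X.map _ _)
  rw [map_map, mkOfLe_self, const_one_fac]

/-- a path of length 2 built from two composable edges -/
def mk₂Path (f g : X _⦋1⦌) (hfg : X.δ 0 f = X.δ 1 g) : Path X 2 where
  vertex := fun i => match i with
    | 0 => X.δ 1 f
    | 1 => X.δ 0 f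
    | 2 => X.δ 0 g
  arrow := fun i => match i with
    | 0 => f
    | 1 => g
  arrow_src := fun i => by fin_cases i
                           · rfl
                           · exact hfg.symm
  arrow_tgt := fun i => by fin_cases i <;> rfl

/-- a path of length 3 built from three composable edges -/
def mk₃Path (f g h : X _⦋1⦌) (hfg : X.δ 0 f = X.δ 1 g) (hgh : X.δ 0 g = X.δ 1 h) :
    Path X 3 where
  vertex := fun i => match i with
    | 0 => X.δ 1 f
    | 1 => X.δ 0 f
    | 2 => X.δ 0 g
    | 3 => X.δ 0 h
  arrow := fun i => match i with
    | 0 => f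
    | 1 => g
    | 2 => h
  arrow_src := fun i => by fin_cases i
                           · rfl
                           · exact hfg.symm
                           · exact hgh.symm
  arrow_tgt := fun i => by fin_cases i <;> rfl

namespace StrictSegal
variable {X : SSet.{u}} [IsStrictSegal X]

noncomputable def spineToSimplex {n : ℕ} (p : Path X n) : X _⦋n⦌ :=
  (SSet.StrictSegal.ofIsStrictSegal X).spineToSimplex p

noncomputable def spineToDiagonal {n : ℕ} (p : Path X n) : X _⦋1⦌ :=
  SimplicialObject.diagonal X (spineToSimplex p)

noncomputable def spineEquiv (n : ℕ) : X _⦋n⦌ ≃ Path X n :=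
  (SSet.StrictSegal.ofIsStrictSegal X).spineEquiv n

lemma spineToSimplex_spine {n : ℕ} (Δ : X _⦋n⦌) : spineToSimplex (X.spine n Δ) = Δ :=
  (SSet.StrictSegal.ofIsStrictSegal X).spineToSimplex_spine_apply Δ

lemma spine_spineToSimplex {n : ℕ} (p : Path X n) : X.spine n (spineToSimplex p) = p :=
  (SSet.StrictSegal.ofIsStrictSegal X).spine_spineToSimplex_apply p

lemma spineInjective {n : ℕ} : Function.Injective (X.spine n) :=
  (IsStrictSegal.segal n).1

lemma spineToSimplex_vertex {n : ℕ} (i : Fin (n + 1)) (f : Path X n) :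
    X.map (SimplexCategory.const ⦋0⦌ ⦋n⦌ i).op (spineToSimplex f) = f.vertex i :=
  (SSet.StrictSegal.ofIsStrictSegal X).spineToSimplex_vertex i f

lemma spineToSimplex_arrow {n : ℕ} (i : Fin n) (f : Path X n) :
    X.map (mkOfSucc i).op (spineToSimplex f) = f.arrow i :=
  (SSet.StrictSegal.ofIsStrictSegal X).spineToSimplex_arrow i f

lemma spine_δ_arrow_lt {n : ℕ} (f : Path X (n + 1)) {i : Fin n} {j : Fin (n + 2)}
    (h : i.succ.castSucc < j) :
    (X.spine n (X.δ j (spineToSimplex f))).arrow i = f.arrow i.castSucc :=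
  (SSet.StrictSegal.ofIsStrictSegal X).spine_δ_arrow_lt f h

lemma spine_δ_arrow_gt {n : ℕ} (f : Path X (n + 1)) {i : Fin n} {j : Fin (n + 2)}
    (h : j < i.succ.castSucc) :
    (X.spine n (X.δ j (spineToSimplex f))).arrow i = f.arrow i.succ :=
  (SSet.StrictSegal.ofIsStrictSegal X).spine_δ_arrow_gt f h

lemma spine_δ_arrow_eq {n : ℕ} (f : Path X (n + 1)) {i : Fin n} {j : Fin (n + 2)}
    (h : j = i.succ.castSucc) :
    (X.spine n (X.δ j (spineToSimplex f))).arrow i =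
      spineToDiagonal (f.interval i 2 (by omega)) :=
  (SSet.StrictSegal.ofIsStrictSegal X).spine_δ_arrow_eq f h

end StrictSegal

section SS
variable [IsStrictSegal X]
open SegalNerveAux.StrictSegal

lemma spineToDiagonal_src {n : ℕ} (p : Path X n) :
    X.δ 1 (spineToDiagonal p) = p.vertex 0 := by
  show X.map _ (X.map _ _) = _
  rw [map_map, diag_eq, δ1_comp_mkOfLe]
  exact spineToSimplex_vertex 0 p

lemma spineToDiagonal_tgt {n : ℕ} (p : Path X n) :
    X.δ 0 (spineToDiagonal p) = p.vertex (Fin.last n) := by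
  show X.map _ (X.map _ _) = _
  rw [map_map, diag_eq, δ0_comp_mkOfLe]
  exact spineToSimplex_vertex _ p


/-- composition of two composable 1-simplices -/
noncomputable def comp₂ (f g : X _⦋1⦌) (hfg : X.δ 0 f = X.δ 1 g) : X _⦋1⦌ :=
  spineToDiagonal (mk₂Path f g hfg)

lemma comp₂_src (f g : X _⦋1⦌) (hfg : X.δ 0 f = X.δ 1 g) :
    X.δ 1 (comp₂ f g hfg) = X.δ 1 f :=
  spineToDiagonal_src _

lemma comp₂_tgt (f g : X _⦋1⦌) (hfg : X.δ 0 f = X.δ 1 g) :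
    X.δ 0 (comp₂ f g hfg) = X.δ 0 g :=
  spineToDiagonal_tgt _

/-- the spine of the degenerate 2-simplex `X.σ 0 f` -/
lemma spine_σ0 (f : X _⦋1⦌) :
    X.spine 2 (X.σ 0 f) = mk₂Path (X.σ 0 (X.δ 1 f)) f (by
      show X.map _ (X.map _ _) = _
      rw [map_map]
      have : (SimplexCategory.δ 0 : (⦋0⦌ : SimplexCategory) ⟶ ⦋1⦌) ≫ SimplexCategory.σ 0 = 𝟙 _ := by
        apply Hom.ext_zero_left
        rfl
      rw [this, op_id, FunctorToTypes.map_id_apply]) := by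
  apply Path.ext'
  intro i
  fin_cases i
  · show X.map (mkOfSucc (0 : Fin 2)).op (X.map (SimplexCategory.σ 0).op f) = _
    rw [map_map]
    have : mkOfSucc (0 : Fin 2) ≫ SimplexCategory.σ 0 =
        (SimplexCategory.σ 0 : (⦋1⦌ : SimplexCategory) ⟶ ⦋0⦌) ≫ SimplexCategory.δ 1 := by
      apply hom1_ext <;> rfl
    rw [this, ← map_map]
    rfl
  · show X.map (mkOfSucc (1 : Fin 2)).op (X.map (SimplexCategory.σ 0).op f) = _
    rw [map_map]
    have : mkOfSucc (1 : Fin 2) ≫ SimplexCategory.σ 0 = 𝟙 _ := by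
      apply hom1_ext <;> rfl
    rw [this, op_id, FunctorToTypes.map_id_apply]
    rfl

/-- the spine of the degenerate 2-simplex `X.σ 1 f` -/
lemma spine_σ1 (f : X _⦋1⦌) :
    X.spine 2 (X.σ 1 f) = mk₂Path f (X.σ 0 (X.δ 0 f)) (by
      show _ = X.map _ (X.map _ _)
      rw [map_map]
      have : (SimplexCategory.δ 1 : (⦋0⦌ : SimplexCategory) ⟶ ⦋1⦌) ≫ SimplexCategory.σ 0 = 𝟙 _ := by
        apply Hom.ext_zero_left
        rfl
      rw [this, op_id, FunctorToTypes.map_id_apply]) := by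
  apply Path.ext'
  intro i
  fin_cases i
  · show X.map (mkOfSucc (0 : Fin 2)).op (X.map (SimplexCategory.σ 1).op f) = _
    rw [map_map]
    have : mkOfSucc (0 : Fin 2) ≫ SimplexCategory.σ 1 = 𝟙 _ := by
      apply hom1_ext <;> rfl
    rw [this, op_id, FunctorToTypes.map_id_apply]
    rfl
  · show X.map (mkOfSucc (1 : Fin 2)).op (X.map (SimplexCategory.σ 1).op f) = _
    rw [map_map]
    have : mkOfSucc (1 : Fin 2) ≫ SimplexCategory.σ 1 =
        (SimplexCategory.σ 0 : (⦋1⦌ : SimplexCategory) ⟶ ⦋0⦌) ≫ SimplexCategory.δ 0 := by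
      apply hom1_ext <;> rfl
    rw [this, ← map_map]
    rfl

lemma comp₂_σ0 (f : X _⦋1⦌) (h) : comp₂ (X.σ 0 (X.δ 1 f)) f h = f := by
  unfold comp₂ spineToDiagonal
  rw [← spine_σ0, spineToSimplex_spine]
  show X.map _ (X.map _ _) = _
  rw [map_map]
  have : SimplexCategory.diag 2 ≫ SimplexCategory.σ 0 = 𝟙 _ := by
    apply hom1_ext <;> rfl
  rw [this, op_id, FunctorToTypes.map_id_apply]

lemma comp₂_σ1 (f : X _⦋1⦌) (h) : comp₂ f (X.σ 0 (X.δ 0 f)) h = f := by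
  unfold comp₂ spineToDiagonal
  rw [← spine_σ1, spineToSimplex_spine]
  show X.map _ (X.map _ _) = _
  rw [map_map]
  have : SimplexCategory.diag 2 ≫ SimplexCategory.σ 1 = 𝟙 _ := by
    apply hom1_ext <;> rfl
  rw [this, op_id, FunctorToTypes.map_id_apply]


lemma interval₀ (f g h : X _⦋1⦌) (hfg : X.δ 0 f = X.δ 1 g) (hgh : X.δ 0 g = X.δ 1 h) :
    (mk₃Path f g h hfg hgh).interval 0 2 (by omega) = mk₂Path f g hfg := by
  apply Path.ext'
  intro i
  fin_cases i <;> rfl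

lemma interval₁ (f g h : X _⦋1⦌) (hfg : X.δ 0 f = X.δ 1 g) (hgh : X.δ 0 g = X.δ 1 h) :
    (mk₃Path f g h hfg hgh).interval 1 2 (by omega) = mk₂Path g h hgh := by
  apply Path.ext'
  intro i
  fin_cases i <;> rfl

lemma comp₂_assoc (f g h : X _⦋1⦌) (hfg : X.δ 0 f = X.δ 1 g) (hgh : X.δ 0 g = X.δ 1 h) :
    comp₂ (comp₂ f g hfg) h (by rw [comp₂_tgt]; exact hgh) =
    comp₂ f (comp₂ g h hgh) (by rw [comp₂_src]; exact hfg) := by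
  set p3 := mk₃Path f g h hfg hgh with hp3
  have h1 : X.spine 2 (X.δ 1 (spineToSimplex p3)) =
      mk₂Path (comp₂ f g hfg) h (by rw [comp₂_tgt]; exact hgh) := by
    apply Path.ext'
    intro i
    fin_cases i
    · show (X.spine 2 (X.δ 1 (spineToSimplex p3))).arrow 0 = comp₂ f g hfg
      rw [StrictSegal.spine_δ_arrow_eq p3 (by rfl)]
      show spineToDiagonal (p3.interval 0 2 (by omega)) = _
      rw [hp3, interval₀]
      rfl
    · show (X.spine 2 (X.δ 1 (spineToSimplex p3))).arrow 1 = h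
      rw [StrictSegal.spine_δ_arrow_gt p3 (by decide)]
      rfl
  have h2 : X.spine 2 (X.δ 2 (spineToSimplex p3)) =
      mk₂Path f (comp₂ g h hgh) (by rw [comp₂_src]; exact hfg) := by
    apply Path.ext'
    intro i
    fin_cases i
    · show (X.spine 2 (X.δ 2 (spineToSimplex p3))).arrow 0 = f
      rw [StrictSegal.spine_δ_arrow_lt p3 (by decide)]
      rfl
    · show (X.spine 2 (X.δ 2 (spineToSimplex p3))).arrow 1 = comp₂ g h hgh
      rw [StrictSegal.spine_δ_arrow_eq p3 (by rfl)]
      show spineToDiagonal (p3.interval 1 2 (by omega)) = _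
      rw [hp3, interval₁]
      rfl
  show spineToDiagonal (mk₂Path (comp₂ f g hfg) h _) = spineToDiagonal (mk₂Path f (comp₂ g h hgh) _)
  unfold spineToDiagonal
  rw [← h1, ← h2, StrictSegal.spineToSimplex_spine, StrictSegal.spineToSimplex_spine]
  show X.map _ (X.map _ _) = X.map _ (X.map _ _)
  rw [map_map, map_map]
  have : (diag 2 ≫ SimplexCategory.δ 1 : (⦋1⦌ : SimplexCategory) ⟶ ⦋3⦌) =
      diag 2 ≫ SimplexCategory.δ 2 := by
    apply hom1_ext <;> rfl
  rw [this]


lemma δ1_σ0 (x : X _⦋0⦌) : X.δ 1 (X.σ 0 x) = x :=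
  by simpa using ConcreteCategory.congr_hom (X.δ_comp_σ_succ' (i := 0) (j := 1) rfl) x

lemma δ0_σ0 (x : X _⦋0⦌) : X.δ 0 (X.σ 0 x) = x :=
  by simpa using ConcreteCategory.congr_hom (X.δ_comp_σ_self' (i := 0) (j := 0) rfl) x

end SS

/-- the objects of the homotopy category of a strict Segal simplicial set -/
def Cat (X : SSet.{u}) : Type u := X _⦋0⦌

section Cat
variable [IsStrictSegal X]
open SegalNerveAux.StrictSegal

/-- morphisms in the homotopy category -/
abbrev CHom (x y : X _⦋0⦌) : Type u := {f : X.obj (op (⦋1⦌ : SimplexCategory)) // X.δ 1 f = x ∧ X.δ 0 f = y}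

/-- composition of morphisms in the homotopy category -/
noncomputable def cComp {x y z : X _⦋0⦌} (f : CHom x y) (g : CHom y z) : CHom x z :=
  ⟨comp₂ f.1 g.1 (f.2.2.trans g.2.1.symm),
    by rw [comp₂_src]; exact f.2.1, by rw [comp₂_tgt]; exact g.2.2⟩

noncomputable instance : SmallCategory (Cat X) where
  Hom x y := CHom x y
  id x := ⟨X.σ 0 x, δ1_σ0 x, δ0_σ0 x⟩
  comp f g := cComp f g
  id_comp {x y} f := by
    obtain ⟨f, hf1, hf0⟩ := f
    subst hf1 hf0
    exact Subtype.ext (comp₂_σ0 f _)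
  comp_id {x y} f := by
    obtain ⟨f, hf1, hf0⟩ := f
    subst hf1 hf0
    exact Subtype.ext (comp₂_σ1 f _)
  assoc {w x y z} f g h := by
    obtain ⟨f, hf1, hf0⟩ := f
    obtain ⟨g, hg1, hg0⟩ := g
    obtain ⟨h, hh1, hh0⟩ := h
    exact Subtype.ext (comp₂_assoc f g h (hf0.trans hg1.symm) (hg0.trans hh1.symm))

/-- include an object into the homotopy category -/
def toCatObj (x : X _⦋0⦌) : Cat X := x

/-- the edge from vertex `i` to vertex `j`, as a morphism in `Cat X` -/
noncomputable def eHom {n : ℕ} (Δ : X _⦋n⦌) {i j : Fin (n + 1)} (h : i ≤ j) :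
    toCatObj (V Δ i) ⟶ toCatObj (V Δ j) :=
  ⟨E Δ h, δ1_E Δ h, δ0_E Δ h⟩

lemma eHom_self {n : ℕ} (Δ : X _⦋n⦌) (i : Fin (n + 1)) :
    eHom Δ (le_refl i) = 𝟙 (toCatObj (V Δ i)) :=
  Subtype.ext (E_self Δ i)

lemma eHom_comp {n : ℕ} (Δ : X _⦋n⦌) {i j k : Fin (n + 1)} (hij : i ≤ j) (hjk : j ≤ k) :
    eHom Δ hij ≫ eHom Δ hjk = eHom Δ (hij.trans hjk) := by
  apply Subtype.ext
  show comp₂ (E Δ hij) (E Δ hjk) _ = E Δ (hij.trans hjk)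
  have hsp : X.spine 2 (X.map (mkOfLeComp i j k hij hjk).op Δ) =
      mk₂Path (E Δ hij) (E Δ hjk) ((δ0_E Δ hij).trans (δ1_E Δ hjk).symm) := by
    apply Path.ext'
    intro a
    fin_cases a
    · show X.map (mkOfSucc (0 : Fin 2)).op (X.map (mkOfLeComp i j k hij hjk).op Δ) = E Δ hij
      rw [map_map]
      have : mkOfSucc (0 : Fin 2) ≫ mkOfLeComp i j k hij hjk = mkOfLe i j hij := by
        apply hom1_ext <;> rfl
      rw [this]
      rfl
    · show X.map (mkOfSucc (1 : Fin 2)).op (X.map (mkOfLeComp i j k hij hjk).op Δ) = E Δ hjk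
      rw [map_map]
      have : mkOfSucc (1 : Fin 2) ≫ mkOfLeComp i j k hij hjk = mkOfLe j k hjk := by
        apply hom1_ext <;> rfl
      rw [this]
      rfl
  show spineToDiagonal (mk₂Path (E Δ hij) (E Δ hjk) _) = E Δ (hij.trans hjk)
  unfold spineToDiagonal
  rw [← hsp, StrictSegal.spineToSimplex_spine]
  show X.map _ (X.map _ _) = _
  rw [map_map]
  have : diag 2 ≫ mkOfLeComp i j k hij hjk = mkOfLe i k (hij.trans hjk) := by
    apply hom1_ext <;> rfl
  rw [this]
  rfl


/-- the comparison map to the nerve -/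
noncomputable def toN {n : ℕ} (Δ : X _⦋n⦌) : ComposableArrows (Cat X) n :=
  ComposableArrows.mkOfObjOfMapSucc (fun i => toCatObj (V Δ i))
    (fun i => eHom Δ (Fin.castSucc_le_succ i))

lemma toN_obj {n : ℕ} (Δ : X _⦋n⦌) (i : Fin (n + 1)) :
    (toN Δ).obj i = toCatObj (V Δ i) := rfl

lemma toN_map' {n : ℕ} (Δ : X _⦋n⦌) (j k : ℕ) (hjk : j ≤ k) (hk : k ≤ n) :
    (toN Δ).map' j k hjk hk =
      eHom Δ (show (⟨j, by omega⟩ : Fin (n + 1)) ≤ ⟨k, by omega⟩ from hjk) := by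
  induction k with
  | zero =>
    have hj : j = 0 := by omega
    subst hj
    rw [ComposableArrows.map'_self (toN Δ) 0 (by omega)]
    exact (eHom_self Δ _).symm
  | succ k ih =>
    rcases Nat.lt_or_ge j (k + 1) with hlt | hge
    · have hjk' : j ≤ k := by omega
      have hk' : k ≤ n := by omega
      have hsucc : (toN Δ).map' k (k + 1) (by omega) hk =
          eHom Δ (show (⟨k, by omega⟩ : Fin (n + 1)) ≤ ⟨k + 1, by omega⟩ by
            simp [Fin.le_def]) :=
        ComposableArrows.mkOfObjOfMapSucc_map_succ _ _ k (by omega)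
      rw [ComposableArrows.map'_comp (toN Δ) j k (k + 1) hjk' (by omega) hk,
        ih hjk' hk', hsucc]
      exact eHom_comp Δ _ _
    · have hj : j = k + 1 := by omega
      subst hj
      rw [ComposableArrows.map'_self (toN Δ) (k + 1) hk]
      exact (eHom_self Δ _).symm


lemma chom_eq {x x' y y' : Cat X} {f : x ⟶ y} {g : x' ⟶ y'} (hx : x = x') (hy : y = y')
    (h : f.1 = g.1) : f = eqToHom hx ≫ g ≫ eqToHom hy.symm := by
  subst hx
  subst hy
  simp only [eqToHom_refl, Category.comp_id, Category.id_comp]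
  exact Subtype.ext h

lemma toN_natural {m n : ℕ} (α : (⦋m⦌ : SimplexCategory) ⟶ ⦋n⦌) (Δ : X _⦋n⦌) :
    toN (X.map α.op Δ) = (nerve (Cat X)).map α.op (toN Δ) := by
  have hobj : ∀ i : Fin (m + 1), V (X.map α.op Δ) i = V Δ (α.toOrderHom i) := by
    intro i
    show X.map _ (X.map _ _) = _
    rw [map_map, SimplexCategory.const_comp]
    rfl
  apply ComposableArrows.ext
    (fun i => (congrArg toCatObj (hobj i) :
      (toN (X.map α.op Δ)).obj i = ((nerve (Cat X)).map α.op (toN Δ)).obj i))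
  intro i hi
  have hle : (α.toOrderHom ⟨i, by simp only [len_mk]; omega⟩ : Fin (n + 1)) ≤
      α.toOrderHom ⟨i + 1, by simp only [len_mk]; omega⟩ :=
    α.toOrderHom.monotone (by simp [Fin.le_def])
  have hG : ((nerve (Cat X)).map α.op (toN Δ)).map' i (i + 1) (by omega)
      (by simp only [len_mk]; omega) = eHom Δ hle :=
    toN_map' Δ (α.toOrderHom ⟨i, by simp only [len_mk]; omega⟩).val
      (α.toOrderHom ⟨i + 1, by simp only [len_mk]; omega⟩).val
      hle (by
        have := (α.toOrderHom ⟨i + 1, by simp only [len_mk]; omega⟩).isLt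
        simp only [len_mk] at this ⊢
        omega)
  rw [toN_map' (X.map α.op Δ) i (i + 1) (by omega) (by omega), hG]
  apply chom_eq (congrArg toCatObj (hobj ⟨i, by omega⟩))
    (congrArg toCatObj (hobj ⟨i + 1, by omega⟩))
  show E (X.map α.op Δ) _ = E Δ hle
  show X.map _ (X.map _ _) = _
  rw [map_map]
  have : mkOfLe (⟨i, by omega⟩ : Fin (m + 1)) ⟨i + 1, by omega⟩ (by simp [Fin.le_def]) ≫ α =
      mkOfLe _ _ hle := by
    apply hom1_ext <;> rfl
  rw [this]
  rfl


/-- extract the underlying 1-simplices of the successive maps -/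
noncomputable def arrowsOf {n : ℕ} (F : ComposableArrows (Cat X) n) (i : Fin n) : X _⦋1⦌ :=
  (F.map' i.val (i.val + 1) (by omega) (by omega)).val

lemma toN_injective {n : ℕ} : Function.Injective (toN (X := X) (n := n)) := by
  intro Δ Δ' h
  apply StrictSegal.spineInjective
  show X.spine n Δ = X.spine n Δ'
  ext i
  · exact congrArg (fun F => F.obj i) h
  · have hval : arrowsOf (toN Δ) i = arrowsOf (toN Δ') i :=
      congrFun (congrArg arrowsOf h) i
    rw [arrowsOf, arrowsOf, toN_map' Δ i.val (i.val + 1) (by omega) (by omega),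
      toN_map' Δ' i.val (i.val + 1) (by omega) (by omega)] at hval
    show X.map (mkOfSucc i).op Δ = X.map (mkOfSucc i).op Δ'
    have hmk : mkOfSucc i = mkOfLe (⟨i.val, by omega⟩ : Fin (n + 1)) ⟨i.val + 1, by omega⟩
        (by simp [Fin.le_def]) := by
      apply hom1_ext <;> rfl
    rw [hmk]
    exact hval

lemma toN_surjective {n : ℕ} : Function.Surjective (toN (X := X) (n := n)) := by
  intro F
  set p : Path X n :=
    { vertex := fun i => F.obj i
      arrow := fun i => arrowsOf F i
      arrow_src := fun i => (F.map' i.val (i.val + 1) (by omega) (by omega)).2.1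
      arrow_tgt := fun i => (F.map' i.val (i.val + 1) (by omega) (by omega)).2.2 } with hp
  refine ⟨StrictSegal.spineToSimplex p, ?_⟩
  have hobj : ∀ i : Fin (n + 1), toCatObj (V (StrictSegal.spineToSimplex p) i) = F.obj i :=
    fun i => congrArg toCatObj (StrictSegal.spineToSimplex_vertex i p)
  apply ComposableArrows.ext
    (fun i => (hobj i : (toN (StrictSegal.spineToSimplex p)).obj i = F.obj i))
  intro i hi
  rw [toN_map' (StrictSegal.spineToSimplex p) i (i + 1) (by omega) (by omega)]
  apply chom_eq (hobj ⟨i, by omega⟩) (hobj ⟨i + 1, by omega⟩)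
  show E (StrictSegal.spineToSimplex p) _ = (F.map' i (i + 1) (by omega) (by omega)).val
  show X.map _ _ = _
  have hmk : mkOfLe (⟨i, by omega⟩ : Fin (n + 1)) ⟨i + 1, by omega⟩ (by simp [Fin.le_def]) =
      mkOfSucc ⟨i, hi⟩ := by
    apply hom1_ext <;> rfl
  rw [hmk, StrictSegal.spineToSimplex_arrow]
  rfl


/-- the natural comparison map to the nerve -/
noncomputable def toNerveNat : X ⟶ nerve (Cat X) where
  app m := TypeCat.ofHom fun Δ => toN (n := m.unop.len) Δ
  naturality a b f := by
    ext Δ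
    exact toN_natural (m := b.unop.len) (n := a.unop.len) f.unop Δ

/-- the comparison map is a natural isomorphism -/
noncomputable def toNerveIso : X ≅ nerve (Cat X) := by
  have : ∀ m, IsIso ((toNerveNat (X := X)).app m) := fun m =>
    (isIso_iff_bijective _).2 ⟨toN_injective (n := m.unop.len), toN_surjective (n := m.unop.len)⟩
  have : IsIso (toNerveNat (X := X)) := NatIso.isIso_of_isIso_app _
  exact asIso toNerveNat


end Cat

lemma spine_naturality' {X Y : SSet.{u}} (σ : X ⟶ Y) {n : ℕ} (Δ : X _⦋n⦌) :
    Y.spine n (σ.app _ Δ) = (X.spine n Δ).map σ := by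
  ext i
  · exact (FunctorToTypes.naturality σ _ Δ).symm
  · exact (FunctorToTypes.naturality σ _ Δ).symm

lemma path_map_map {X Y Z : SSet.{u}} {n : ℕ} (p : Path X n) (σ : X ⟶ Y) (τ : Y ⟶ Z) :
    (p.map σ).map τ = p.map (σ ≫ τ) := rfl

lemma path_map_id {X : SSet.{u}} {n : ℕ} (p : Path X n) : p.map (𝟙 X) = p := rfl

lemma spine_bijective_of_iso {X : SSet.{u}} {C : Type u} [SmallCategory C]
    (e : X ≅ nerve C) (k : ℕ) : Function.Bijective (X.spine k) := by
  constructor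
  · intro Δ Δ' h
    have h2 : (nerve C).spine k (e.hom.app _ Δ) = (nerve C).spine k (e.hom.app _ Δ') := by
      rw [spine_naturality' e.hom Δ, spine_naturality' e.hom Δ', h]
    have h3 : e.hom.app _ Δ = e.hom.app _ Δ' := StrictSegal.spineInjective h2
    have h4 := congrArg (e.inv.app (op ⦋k⦌)) h3
    simpa using h4
  · intro p
    obtain ⟨F, hF⟩ := (StrictSegal.spineEquiv (X := nerve C) k).surjective (p.map e.hom)
    refine ⟨e.inv.app _ F, ?_⟩
    rw [spine_naturality' e.inv F, show (nerve C).spine k F = p.map e.hom from hF,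
      path_map_map, e.hom_inv_id, path_map_id]

lemma spine_zero_bijective (X : SSet.{u}) : Function.Bijective (X.spine 0) := by
  constructor
  · intro a b h
    have h0 := congrArg (fun p => p.vertex 0) h
    simpa only [SSet.spine_vertex, const_eq_id, op_id, FunctorToTypes.map_id_apply] using h0
  · intro p
    refine ⟨p.vertex 0, ?_⟩
    refine SSet.Path.ext (funext fun i => ?_) (funext fun i => ?_)
    · fin_cases i
      show X.map (SimplexCategory.const ⦋0⦌ ⦋0⦌ 0).op (p.vertex 0) = p.vertex 0
      rw [const_eq_id, op_id, FunctorToTypes.map_id_apply]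
    · exact i.elim0

end SegalNerveAux

open SegalNerveAux in
/-- A simplicial set is isomorphic to the nerve of a small category iff it satisfies the
Segal condition: for every `k ≥ 1` the spine map `X_k → X_1 ×_{X_0} ⋯ ×_{X_0} X_1`
(with values in the type `X.Path k` of composable paths of edges) is a bijection. -/
theorem iso_nerve_iff_segal (X : SSet.{u}) :
    (∃ (C : Type u) (_ : SmallCategory C), Nonempty (X ≅ nerve C)) ↔
      (∀ k : ℕ, 1 ≤ k → Function.Bijective (X.spine k)) := by
  constructor
  · rintro ⟨C, inst, ⟨e⟩⟩ k _
    exact spine_bijective_of_iso e k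
  · intro h
    have hall : ∀ n : ℕ, Function.Bijective (X.spine n) := fun n =>
      match n with
      | 0 => spine_zero_bijective X
      | (n + 1) => h (n + 1) (by omega)
    haveI : IsStrictSegal X := ⟨hall⟩
    exact ⟨Cat X, inferInstance, ⟨toNerveIso⟩⟩
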